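/- In the formal power series ring k[[x,y,z]], the element ξ := (y−α)(z−β) satisfies ξ² = fg ∈ ((f,g))², hence ξ is integral over the ideal (f,g)k[[x,y,z]], but ξ ∉ (f,g)k[[x,y,z]]; consequently the ideal (f,g)k[[x,y,z]] is not integrally closed. -/

import Mathlib

noncomputable section

variable (k : Type) [Field k]

/-- `k[[x,y,z]]`, realized as the iterated power series ring `k[[z]][[y]][[x]]`. -/
abbrev T3 (k : Type) [Field k] := PowerSeries (PowerSeries (PowerSeries k))

/-- `x ∈ k[[x,y,z]]`. -/
def xT : T3 k := PowerSeries.X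
/-- `y ∈ k[[x,y,z]]`. -/
def yT : T3 k := PowerSeries.C (R := _) PowerSeries.X
/-- `z ∈ k[[x,y,z]]`. -/
def zT : T3 k := PowerSeries.C (R := _) (PowerSeries.C (R := _) PowerSeries.X)

/-- The inclusion `k ⊆ k[[x,y,z]]`. -/
def kT : k →+* T3 k :=
  (PowerSeries.C (R := _)).comp ((PowerSeries.C (R := _)).comp (PowerSeries.C (R := k)))

/-- The inclusion `k[[x]] ⊆ k[[x,y,z]]`. -/
def embT : PowerSeries k →+* T3 k :=
  PowerSeries.map ((PowerSeries.C (R := _)).comp (PowerSeries.C (R := k)))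

/-- `f = (y - α)²` as an element of `k[[x,y,z]]`. -/
def fT (α : PowerSeries k) : T3 k := (yT k - embT k α) ^ 2
/-- `g = (z - β)²` as an element of `k[[x,y,z]]`. -/
def gT (β : PowerSeries k) : T3 k := (zT k - embT k β) ^ 2

/-- `r` is integral over the ideal `I`: it satisfies a monic equation
`r^n + a₁ r^(n-1) + ⋯ + aₙ = 0` with `aᵢ ∈ Iⁱ`. -/
def IsIntegralOverIdeal {R : Type*} [CommRing R] (I : Ideal R) (r : R) : Prop :=
  ∃ n : ℕ, 0 < n ∧ ∃ a : ℕ → R, (∀ i ∈ Finset.Icc 1 n, a i ∈ I ^ i) ∧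
    r ^ n + ∑ i ∈ Finset.Icc 1 n, a i * r ^ (n - i) = 0

/-- An ideal is integrally closed if every element integral over it belongs to it. -/
def IsIntegrallyClosedIdeal {R : Type*} [CommRing R] (I : Ideal R) : Prop :=
  ∀ r : R, IsIntegralOverIdeal I r → r ∈ I

/-- In `k[[x,y,z]]`, with `α, β ∈ x·k[[x]]`, `f = (y-α)²`, `g = (z-β)²`,
the element `ξ = (y-α)(z-β)` satisfies `ξ² = fg ∈ (f,g)²`, hence is integral over `(f,g)`,
but `ξ ∉ (f,g)`; consequently `(f,g)` is not integrally closed. -/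
theorem xi_integral_not_mem (α β : PowerSeries k)
    (hα : PowerSeries.constantCoeff (R := k) α = 0) (hβ : PowerSeries.constantCoeff (R := k) β = 0) :
    ((yT k - embT k α) * (zT k - embT k β)) ^ 2 = fT k α * gT k β ∧
    fT k α * gT k β ∈ (Ideal.span {fT k α, gT k β}) ^ 2 ∧
    IsIntegralOverIdeal (Ideal.span {fT k α, gT k β})
      ((yT k - embT k α) * (zT k - embT k β)) ∧
    (yT k - embT k α) * (zT k - embT k β) ∉ Ideal.span {fT k α, gT k β} ∧
    ¬ IsIntegrallyClosedIdeal (Ideal.span {fT k α, gT k β}) := by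
  set I : Ideal (T3 k) := Ideal.span {fT k α, gT k β} with hI
  have hf : fT k α ∈ I := Ideal.subset_span (by simp)
  have hg : gT k β ∈ I := Ideal.subset_span (by simp)
  have h1 : ((yT k - embT k α) * (zT k - embT k β)) ^ 2 = fT k α * gT k β := by
    rw [fT, gT]; ring
  have h2 : fT k α * gT k β ∈ I ^ 2 := by
    rw [pow_two]; exact Ideal.mul_mem_mul hf hg
  have h3 : IsIntegralOverIdeal I ((yT k - embT k α) * (zT k - embT k β)) := by
    refine ⟨2, two_pos, fun i => if i = 2 then -(fT k α * gT k β) else 0, ?_, ?_⟩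
    · intro i hi
      by_cases h : i = 2
      · subst h; simpa using neg_mem h2
      · simp [h]
    · have : Finset.Icc 1 2 = ({1, 2} : Finset ℕ) := rfl
      rw [this]
      simp [h1]
  have h4 : (yT k - embT k α) * (zT k - embT k β) ∉ I := by
    intro hmem
    rw [hI, Ideal.mem_span_pair] at hmem
    obtain ⟨a, b, hab⟩ := hmem
    -- apply constantCoeff (in x) to get an equation in k[[z]][[y]]
    set φ : T3 k →+* PowerSeries (PowerSeries k) :=
      PowerSeries.constantCoeff (R := PowerSeries (PowerSeries k)) with hφ
    have hy : φ (yT k) = PowerSeries.X := PowerSeries.constantCoeff_C _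
    have hz : φ (zT k) = PowerSeries.C (R := _) PowerSeries.X := PowerSeries.constantCoeff_C _
    have hαe : φ (embT k α) = 0 := by
      rw [hφ, embT, ← PowerSeries.coeff_zero_eq_constantCoeff_apply,
        PowerSeries.coeff_map, PowerSeries.coeff_zero_eq_constantCoeff_apply, hα, map_zero]
    have hβe : φ (embT k β) = 0 := by
      rw [hφ, embT, ← PowerSeries.coeff_zero_eq_constantCoeff_apply,
        PowerSeries.coeff_map, PowerSeries.coeff_zero_eq_constantCoeff_apply, hβ, map_zero]
    have key := congrArg φ hab
    rw [map_add, map_mul, map_mul, map_mul, fT, gT, map_pow, map_pow, map_sub, map_sub,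
      hy, hz, hαe, hβe, sub_zero, sub_zero] at key
    -- now: φ a * X^2 + φ b * (C X)^2 = X * C X in k[[z]][[y]]
    have key2 := congrArg (PowerSeries.coeff (R := PowerSeries k) 1) key
    rw [map_add, ← map_pow, PowerSeries.coeff_mul_X_pow', PowerSeries.coeff_mul_C,
      mul_comm PowerSeries.X, PowerSeries.coeff_C_mul, PowerSeries.coeff_one_X,
      mul_one] at key2
    simp only [if_neg (by norm_num : ¬ (2 : ℕ) ≤ 1), zero_add] at key2
    -- key2 : coeff 1 (φ b) * X^2 = X in k[[z]]
    have key3 := congrArg (PowerSeries.coeff (R := k) 1) key2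
    rw [PowerSeries.coeff_mul_X_pow', PowerSeries.coeff_one_X] at key3
    simp only [if_neg (by norm_num : ¬ (2 : ℕ) ≤ 1)] at key3
    exact zero_ne_one key3
  exact ⟨h1, h2, h3, h4, fun hcl => h4 (hcl _ h3)⟩
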